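/- Lower bound for differentially private spanning-tree procurement: there exists k₀ such that for all integers k ≥ k₀ the following holds. Let G be the complete graph on k vertices, and let M be a mechanism that, for every cost vector c assigning each edge of G a cost in [0,1], outputs a probability distribution M(c) over spanning trees of G. Suppose (i) M is ε-differentially private: for any two cost vectors c, c' with entries in [0,1] that differ in the cost of only one edge, and every spanning tree T, Pr[M(c) = T] ≤ exp(ε)·Pr[M(c') = T]; and (ii) for every cost vector c with entries in [0,1], the expected total cost E_{T ∼ M(c)}[∑_{e ∈ T} c(e)] is at most opt(c) + k/24, where opt(c) is the minimum total cost of a spanning tree of G under c. Then exp(ε) ≥ (2k − 1)/48. -/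

import Mathlib

open scoped Classical
open Finset

/-- A finset `T` of potential edges on vertex set `Fin k` is a spanning tree of the
complete graph on `k` vertices if it consists of non-loop edges, the graph it spans is
connected, and it has exactly `k − 1` edges. -/
def IsSpanningTree (k : ℕ) (T : Finset (Sym2 (Fin k))) : Prop :=
  (∀ e ∈ T, ¬ e.IsDiag) ∧
    (SimpleGraph.fromEdgeSet (T : Set (Sym2 (Fin k)))).Connected ∧ T.card = k - 1

namespace STLB

variable {k : ℕ}

/-- boolean costs to real costs -/
noncomputable def bc (c : Sym2 (Fin k) → Bool) : Sym2 (Fin k) → ℝ :=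
  fun e => if c e then 1 else 0

lemma bc_nonneg (c : Sym2 (Fin k) → Bool) (e : Sym2 (Fin k)) : 0 ≤ bc c e := by
  unfold bc; split <;> norm_num

lemma bc_mem (c : Sym2 (Fin k) → Bool) :
    ∀ e : Sym2 (Fin k), ¬ e.IsDiag → bc c e ∈ Set.Icc (0 : ℝ) 1 := by
  intro e _; unfold bc; split <;> simp

/-- parent map: pick a cheap lower neighbour if one exists, else 0. -/
noncomputable def par [NeZero k] (c : Sym2 (Fin k) → Bool) (v : Fin k) : Fin k :=
  if h : ∃ u, u < v ∧ c s(u, v) = false then h.choose else 0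

lemma par_lt [NeZero k] (c : Sym2 (Fin k) → Bool) {v : Fin k} (hv : v ≠ 0) :
    par c v < v := by
  unfold par
  split
  · next h => exact h.choose_spec.1
  · exact (Fin.pos_iff_ne_zero' v).2 hv

/-- the cheap-ish spanning tree -/
noncomputable def stree [NeZero k] (c : Sym2 (Fin k) → Bool) : Finset (Sym2 (Fin k)) :=
  (univ.filter (fun v : Fin k => v ≠ 0)).image (fun v => s(par c v, v))

lemma stree_injOn [NeZero k] (c : Sym2 (Fin k) → Bool) :
    ∀ x ∈ univ.filter (fun v : Fin k => v ≠ 0),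
      ∀ y ∈ univ.filter (fun v : Fin k => v ≠ 0),
        s(par c x, x) = s(par c y, y) → x = y := by
  intro x hx y hy hxy
  simp only [mem_filter] at hx hy
  rw [Sym2.eq_iff] at hxy
  rcases hxy with ⟨-, h2⟩ | ⟨h1, h2⟩
  · exact h2
  · exfalso
    have hx' := par_lt c hx.2
    have hy' := par_lt c hy.2
    rw [h1] at hx'
    rw [← h2] at hy'
    exact absurd (hx'.trans hy') (lt_irrefl _)

lemma stree_card [NeZero k] (c : Sym2 (Fin k) → Bool) : (stree c).card = k - 1 := by
  unfold stree
  rw [Finset.card_image_of_injOn (stree_injOn c)]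
  rw [Finset.filter_ne', Finset.card_erase_of_mem (mem_univ _), Finset.card_univ,
    Fintype.card_fin]

lemma stree_nondiag [NeZero k] (c : Sym2 (Fin k) → Bool) :
    ∀ e ∈ stree c, ¬ e.IsDiag := by
  intro e he
  unfold stree at he
  simp only [mem_image, mem_filter] at he
  obtain ⟨v, ⟨-, hv⟩, rfl⟩ := he
  simp only [Sym2.isDiag_iff_proj_eq]
  exact fun h => absurd h (ne_of_lt (par_lt c hv))

lemma stree_connected [NeZero k] (c : Sym2 (Fin k) → Bool) :
    (SimpleGraph.fromEdgeSet ((stree c : Set (Sym2 (Fin k))))).Connected := by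
  rw [SimpleGraph.connected_iff]
  constructor
  · intro u v
    -- reduce to reachability to 0
    suffices h : ∀ w : Fin k,
        (SimpleGraph.fromEdgeSet ((stree c : Set (Sym2 (Fin k))))).Reachable w 0 by
      exact (h u).trans (h v).symm
    suffices h' : ∀ n (w : Fin k), w.val = n →
        (SimpleGraph.fromEdgeSet ((stree c : Set (Sym2 (Fin k))))).Reachable w 0 by
      intro w; exact h' w.val w rfl
    intro n
    induction n using Nat.strong_induction_on with
    | _ n ih =>
      intro w hn
      by_cases hw : w = 0
      · subst hw; rfl
      · have hlt := par_lt c hw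
        have hadj : (SimpleGraph.fromEdgeSet ((stree c : Set (Sym2 (Fin k))))).Adj w (par c w) := by
          rw [SimpleGraph.fromEdgeSet_adj]
          refine ⟨?_, (ne_of_lt hlt).symm⟩
          rw [Sym2.eq_swap]
          simp only [Finset.coe_insert, Set.mem_insert_iff, Finset.mem_coe]
          unfold stree
          simp only [Finset.mem_image, mem_filter]
          exact ⟨w, ⟨mem_univ _, hw⟩, rfl⟩
        exact hadj.reachable.trans (ih (par c w).val (hn ▸ hlt) (par c w) rfl)
  · exact ⟨0⟩

lemma stree_isSpanningTree [NeZero k] (c : Sym2 (Fin k) → Bool) :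
    IsSpanningTree k (stree c) :=
  ⟨stree_nondiag c, stree_connected c, stree_card c⟩

noncomputable def Dv [NeZero k] (c : Sym2 (Fin k) → Bool) : Finset (Fin k) :=
  univ.filter (fun v : Fin k => v ≠ 0 ∧ ∀ u, u < v → c s(u, v) = true)

lemma stree_cost_le [NeZero k] (c : Sym2 (Fin k) → Bool) :
    ∑ e ∈ stree c, bc c e ≤ ((Dv c).card : ℝ) := by
  unfold stree
  rw [Finset.sum_image (stree_injOn c)]
  have h1 : ∑ v ∈ univ.filter (fun v : Fin k => v ≠ 0), bc c s(par c v, v)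
      ≤ ∑ v ∈ univ.filter (fun v : Fin k => v ≠ 0),
        (if (∀ u, u < v → c s(u, v) = true) then (1 : ℝ) else 0) := by
    apply Finset.sum_le_sum
    intro v hv
    by_cases h : ∃ u, u < v ∧ c s(u, v) = false
    · have : c s(par c v, v) = false := by
        unfold par; rw [dif_pos h]; exact h.choose_spec.2
      rw [bc, this]
      simp only [Bool.false_eq_true, if_false]
      split <;> norm_num
    · push_neg at h
      have h' : ∀ u, u < v → c s(u, v) = true := by
        intro u hu
        have := h u hu
        exact Bool.not_eq_false _ |>.mp (by simpa using this)
      rw [if_pos h']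
      unfold bc; split <;> norm_num
  refine h1.trans ?_
  rw [Finset.sum_boole, Finset.filter_filter]
  unfold Dv
  norm_num

noncomputable def Opt (k : ℕ) (cr : Sym2 (Fin k) → ℝ) : ℝ :=
  sInf {x : ℝ | ∃ T : Finset (Sym2 (Fin k)), IsSpanningTree k T ∧ x = ∑ e ∈ T, cr e}

lemma opt_le [NeZero k] (c : Sym2 (Fin k) → Bool) :
    Opt k (bc c) ≤ ((Dv c).card : ℝ) := by
  refine le_trans (csInf_le ?_ ⟨stree c, stree_isSpanningTree c, rfl⟩) (stree_cost_le c)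
  refine ⟨0, ?_⟩
  rintro x ⟨T, -, rfl⟩
  exact Finset.sum_nonneg fun e _ => bc_nonneg c e

noncomputable def mu (p q : ℝ) (c : Sym2 (Fin k) → Bool) : ℝ :=
  ∏ e : Sym2 (Fin k), (if c e then q else p)

lemma mu_nonneg {p q : ℝ} (hp : 0 ≤ p) (hq : 0 ≤ q) (c : Sym2 (Fin k) → Bool) :
    0 ≤ mu p q c :=
  Finset.prod_nonneg fun e _ => by split <;> assumption

lemma sum_mu {p q : ℝ} (hpq : p + q = 1) :
    ∑ c : Sym2 (Fin k) → Bool, mu p q c = 1 := by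
  unfold mu
  rw [← Fintype.prod_sum (fun (_ : Sym2 (Fin k)) (b : Bool) => if b then q else p)]
  have : ∀ e : Sym2 (Fin k), (∑ b : Bool, if b then q else p) = 1 := by
    intro e
    rw [Fintype.sum_bool]
    simp only [if_true, Bool.false_eq_true, if_false]
    linarith
  rw [Finset.prod_congr rfl fun e _ => this e, Finset.prod_const_one]

lemma mu_indicator {p q : ℝ} (hpq : p + q = 1) (B : Finset (Sym2 (Fin k))) :
    ∑ c : Sym2 (Fin k) → Bool,
      mu p q c * (if (∀ e ∈ B, c e = true) then (1 : ℝ) else 0) = q ^ B.card := by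
  have hind : ∀ c : Sym2 (Fin k) → Bool,
      (if (∀ e ∈ B, c e = true) then (1 : ℝ) else 0)
        = ∏ e ∈ B, (if c e then (1 : ℝ) else 0) := by
    intro c
    by_cases H : ∀ e ∈ B, c e = true
    · rw [if_pos H]
      exact (Finset.prod_eq_one fun e he => by rw [H e he, if_pos rfl]).symm
    · rw [if_neg H]
      push_neg at H
      obtain ⟨e, he, hce⟩ := H
      refine (Finset.prod_eq_zero he ?_).symm
      rw [if_neg (by simpa using hce)]
  have key : ∀ c : Sym2 (Fin k) → Bool,
      mu p q c * (if (∀ e ∈ B, c e = true) then (1 : ℝ) else 0)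
        = ∏ e : Sym2 (Fin k),
            ((if c e then q else p) * (if e ∈ B then (if c e then (1:ℝ) else 0) else 1)) := by
    intro c
    rw [hind c, ← Fintype.prod_ite_mem B (fun e => if c e then (1:ℝ) else 0)]
    unfold mu
    rw [← Finset.prod_mul_distrib]
  rw [Finset.sum_congr rfl fun c _ => key c]
  rw [← Fintype.prod_sum (fun (e : Sym2 (Fin k)) (b : Bool) =>
    (if b then q else p) * (if e ∈ B then (if b then (1:ℝ) else 0) else 1))]
  have : ∀ e : Sym2 (Fin k),
      (∑ b : Bool, (if b then q else p) * (if e ∈ B then (if b then (1:ℝ) else 0) else 1))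
        = if e ∈ B then q else 1 := by
    intro e
    rw [Fintype.sum_bool]
    by_cases he : e ∈ B <;> simp [he] <;> linarith
  rw [Finset.prod_congr rfl fun e _ => this e, Fintype.prod_ite_mem B (fun _ => q),
    Finset.prod_const]

section Mech

variable (M : (Sym2 (Fin k) → ℝ) → Finset (Sym2 (Fin k)) → ℝ)

noncomputable def Pe (c : Sym2 (Fin k) → Bool) (e : Sym2 (Fin k)) : ℝ :=
  ∑ T : Finset (Sym2 (Fin k)), M (bc c) T * (if e ∈ T then 1 else 0)

noncomputable def Ac (c : Sym2 (Fin k) → Bool) : ℝ :=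
  ∑ T : Finset (Sym2 (Fin k)), M (bc c) T * ∑ e ∈ T, bc c e

lemma Pe_nonneg {c : Sym2 (Fin k) → Bool} (h0 : ∀ T, 0 ≤ M (bc c) T)
    (e : Sym2 (Fin k)) : 0 ≤ Pe M c e :=
  Finset.sum_nonneg fun T _ =>
    mul_nonneg (h0 T) (by split <;> norm_num)

lemma sum_Pe (hk : 1 ≤ k) {c : Sym2 (Fin k) → Bool}
    (hs : ∀ T, ¬ IsSpanningTree k T → M (bc c) T = 0)
    (ht : ∑ T : Finset (Sym2 (Fin k)), M (bc c) T = 1) :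
    ∑ e : Sym2 (Fin k), Pe M c e = (k : ℝ) - 1 := by
  unfold Pe
  rw [Finset.sum_comm]
  have h1 : ∀ T : Finset (Sym2 (Fin k)),
      (∑ e : Sym2 (Fin k), M (bc c) T * (if e ∈ T then (1:ℝ) else 0))
        = M (bc c) T * (T.card : ℝ) := by
    intro T
    rw [← Finset.mul_sum, Finset.sum_boole, Finset.filter_univ_mem]
  rw [Finset.sum_congr rfl fun T _ => h1 T]
  have h2 : ∀ T : Finset (Sym2 (Fin k)),
      M (bc c) T * (T.card : ℝ) = M (bc c) T * ((k : ℝ) - 1) := by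
    intro T
    by_cases hT : M (bc c) T = 0
    · rw [hT, zero_mul, zero_mul]
    · have hsp : IsSpanningTree k T := by
        by_contra hns
        exact hT (hs T hns)
      rw [hsp.2.2]
      congr 1
      rw [Nat.cast_sub hk, Nat.cast_one]
  rw [Finset.sum_congr rfl fun T _ => h2 T, ← Finset.sum_mul, ht, one_mul]

lemma sum_Pe_true (c : Sym2 (Fin k) → Bool) :
    ∑ e : Sym2 (Fin k), (if c e = true then Pe M c e else 0) = Ac M c := by
  unfold Pe Ac
  have h1 : ∀ e : Sym2 (Fin k), (if c e = true then
      (∑ T : Finset (Sym2 (Fin k)), M (bc c) T * (if e ∈ T then (1:ℝ) else 0)) else 0)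
      = ∑ T : Finset (Sym2 (Fin k)),
          (if e ∈ T then M (bc c) T * bc c e else 0) := by
    intro e
    by_cases hce : c e = true
    · rw [if_pos hce]
      refine Finset.sum_congr rfl fun T _ => ?_
      by_cases heT : e ∈ T
      · rw [if_pos heT, if_pos heT, bc, if_pos hce, mul_one]
      · rw [if_neg heT, if_neg heT, mul_zero]
    · rw [if_neg hce]
      refine (Finset.sum_eq_zero fun T _ => ?_).symm
      have : bc c e = 0 := by rw [bc, if_neg hce]
      rw [this, mul_zero, ite_self]
  rw [Finset.sum_congr rfl fun e _ => h1 e, Finset.sum_comm]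
  refine Finset.sum_congr rfl fun T _ => ?_
  rw [Finset.sum_ite_mem, Finset.univ_inter, Finset.mul_sum]

end Mech

section Pairing

variable (M : (Sym2 (Fin k) → ℝ) → Finset (Sym2 (Fin k)) → ℝ)

noncomputable def Rf (p q : ℝ) (e : Sym2 (Fin k)) (c : Sym2 (Fin k) → Bool) : ℝ :=
  ∏ x ∈ Finset.univ.erase e, (if c x then q else p)

lemma Rf_nonneg {p q : ℝ} (hp : 0 ≤ p) (hq : 0 ≤ q) (e : Sym2 (Fin k))
    (c : Sym2 (Fin k) → Bool) : 0 ≤ Rf p q e c :=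
  Finset.prod_nonneg fun x _ => by split <;> assumption

lemma mu_eq_Rf (p q : ℝ) (e : Sym2 (Fin k)) (c : Sym2 (Fin k) → Bool) :
    mu p q c = (if c e then q else p) * Rf p q e c := by
  unfold mu Rf
  exact (Finset.mul_prod_erase univ _ (mem_univ e)).symm

lemma Rf_update (p q : ℝ) (e : Sym2 (Fin k)) (c : Sym2 (Fin k) → Bool) (b : Bool) :
    Rf p q e (Function.update c e b) = Rf p q e c := by
  unfold Rf
  refine Finset.prod_congr rfl fun x hx => ?_
  rw [Function.update_of_ne (Finset.mem_erase.1 hx).1]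

lemma pairing {p q ε : ℝ} (hp : 0 ≤ p) (hq : 0 ≤ q)
    (h0 : ∀ c : Sym2 (Fin k) → Bool, ∀ T, 0 ≤ M (bc c) T)
    (hDP : ∀ (c c' : Sym2 (Fin k) → Bool) (e₀ : Sym2 (Fin k)),
      (∀ f ≠ e₀, c f = c' f) →
      ∀ T, M (bc c) T ≤ Real.exp ε * M (bc c') T)
    (e : Sym2 (Fin k)) :
    q * ∑ c ∈ univ.filter (fun c : Sym2 (Fin k) → Bool => c e = false),
        mu p q c * Pe M c e
      ≤ Real.exp ε * (p * ∑ c ∈ univ.filter (fun c : Sym2 (Fin k) → Bool => c e = true),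
          mu p q c * Pe M c e) := by
  have hPeDP : ∀ c : Sym2 (Fin k) → Bool,
      Pe M c e ≤ Real.exp ε * Pe M (Function.update c e true) e := by
    intro c
    have hM : ∀ T, M (bc c) T ≤ Real.exp ε * M (bc (Function.update c e true)) T := by
      refine hDP c _ e fun f hf => ?_
      rw [Function.update_of_ne hf]
    unfold Pe
    rw [Finset.mul_sum]
    refine Finset.sum_le_sum fun T _ => ?_
    rw [← mul_assoc]
    exact mul_le_mul_of_nonneg_right (hM T) (by split <;> norm_num)
  -- rewrite LHS
  have lhs_eq : q * ∑ c ∈ univ.filter (fun c : Sym2 (Fin k) → Bool => c e = false),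
      mu p q c * Pe M c e
      = ∑ c ∈ univ.filter (fun c : Sym2 (Fin k) → Bool => c e = false),
          (q * p) * (Rf p q e c * Pe M c e) := by
    rw [Finset.mul_sum]
    refine Finset.sum_congr rfl fun c hc => ?_
    have hce : c e = false := (Finset.mem_filter.1 hc).2
    rw [mu_eq_Rf p q e c, hce]
    simp only [Bool.false_eq_true, if_false]
    ring
  rw [lhs_eq]
  have step1 : ∑ c ∈ univ.filter (fun c : Sym2 (Fin k) → Bool => c e = false),
      (q * p) * (Rf p q e c * Pe M c e)
      ≤ ∑ c ∈ univ.filter (fun c : Sym2 (Fin k) → Bool => c e = false),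
          Real.exp ε * ((q * p) * (Rf p q e c * Pe M (Function.update c e true) e)) := by
    refine Finset.sum_le_sum fun c _ => ?_
    have h1 : Rf p q e c * Pe M c e
        ≤ Rf p q e c * (Real.exp ε * Pe M (Function.update c e true) e) :=
      mul_le_mul_of_nonneg_left (hPeDP c) (Rf_nonneg hp hq e c)
    calc (q * p) * (Rf p q e c * Pe M c e)
        ≤ (q * p) * (Rf p q e c * (Real.exp ε * Pe M (Function.update c e true) e)) :=
          mul_le_mul_of_nonneg_left h1 (mul_nonneg hq hp)
      _ = Real.exp ε * ((q * p) * (Rf p q e c * Pe M (Function.update c e true) e)) := by ring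
  refine step1.trans ?_
  rw [← Finset.mul_sum]
  apply mul_le_mul_of_nonneg_left _ (le_of_lt (Real.exp_pos ε))
  -- reindex
  have reidx : ∑ c ∈ univ.filter (fun c : Sym2 (Fin k) → Bool => c e = false),
      (q * p) * (Rf p q e c * Pe M (Function.update c e true) e)
      = ∑ c ∈ univ.filter (fun c : Sym2 (Fin k) → Bool => c e = true),
          (q * p) * (Rf p q e c * Pe M c e) := by
    refine Finset.sum_nbij' (fun c => Function.update c e true)
      (fun c => Function.update c e false) ?_ ?_ ?_ ?_ ?_
    · intro c hc
      simp only [Finset.mem_filter, Finset.mem_univ, true_and]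
      rw [Function.update_self]
    · intro c hc
      simp only [Finset.mem_filter, Finset.mem_univ, true_and]
      rw [Function.update_self]
    · intro c hc
      have hce : c e = false := (Finset.mem_filter.1 hc).2
      show Function.update (Function.update c e true) e false = c
      rw [Function.update_idem, ← hce, Function.update_eq_self]
    · intro c hc
      have hce : c e = true := (Finset.mem_filter.1 hc).2
      show Function.update (Function.update c e false) e true = c
      rw [Function.update_idem, ← hce, Function.update_eq_self]
    · intro c hc
      rw [Rf_update]
  rw [reidx]
  rw [Finset.mul_sum]
  refine le_of_eq (Finset.sum_congr rfl fun c hc => ?_)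
  have hce : c e = true := (Finset.mem_filter.1 hc).2
  rw [mu_eq_Rf p q e c, hce, if_pos rfl]
  ring

end Pairing

section Global

variable (M : (Sym2 (Fin k) → ℝ) → Finset (Sym2 (Fin k)) → ℝ)

lemma global_dp {p q ε : ℝ} (hk : 1 ≤ k) (hp : 0 ≤ p) (hq : 0 ≤ q) (hpq : p + q = 1)
    (h0 : ∀ c : Sym2 (Fin k) → Bool, ∀ T, 0 ≤ M (bc c) T)
    (hs : ∀ c : Sym2 (Fin k) → Bool, ∀ T, ¬ IsSpanningTree k T → M (bc c) T = 0)
    (ht : ∀ c : Sym2 (Fin k) → Bool, ∑ T : Finset (Sym2 (Fin k)), M (bc c) T = 1)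
    (hDP : ∀ (c c' : Sym2 (Fin k) → Bool) (e₀ : Sym2 (Fin k)),
      (∀ f ≠ e₀, c f = c' f) →
      ∀ T, M (bc c) T ≤ Real.exp ε * M (bc c') T) :
    q * (((k : ℝ) - 1) - ∑ c : Sym2 (Fin k) → Bool, mu p q c * Ac M c)
      ≤ Real.exp ε * (p * ∑ c : Sym2 (Fin k) → Bool, mu p q c * Ac M c) := by
  -- the two global sums
  have T1 : ∑ e : Sym2 (Fin k), ∑ c ∈ univ.filter
        (fun c : Sym2 (Fin k) → Bool => c e = true), mu p q c * Pe M c e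
      = ∑ c : Sym2 (Fin k) → Bool, mu p q c * Ac M c := by
    have h1 : ∀ e : Sym2 (Fin k), ∑ c ∈ univ.filter
          (fun c : Sym2 (Fin k) → Bool => c e = true), mu p q c * Pe M c e
        = ∑ c : Sym2 (Fin k) → Bool,
            (if c e = true then mu p q c * Pe M c e else 0) := by
      intro e; rw [Finset.sum_filter]
    rw [Finset.sum_congr rfl fun e _ => h1 e, Finset.sum_comm]
    refine Finset.sum_congr rfl fun c _ => ?_
    rw [← sum_Pe_true M c, Finset.mul_sum]
    refine Finset.sum_congr rfl fun e _ => ?_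
    by_cases hce : c e = true
    · rw [if_pos hce, if_pos hce]
    · rw [if_neg hce, if_neg hce, mul_zero]
  have T0 : ∑ e : Sym2 (Fin k), ∑ c ∈ univ.filter
        (fun c : Sym2 (Fin k) → Bool => c e = false), mu p q c * Pe M c e
      = ((k : ℝ) - 1) - ∑ c : Sym2 (Fin k) → Bool, mu p q c * Ac M c := by
    have h1 : ∀ e : Sym2 (Fin k), ∑ c ∈ univ.filter
          (fun c : Sym2 (Fin k) → Bool => c e = false), mu p q c * Pe M c e
        = ∑ c : Sym2 (Fin k) → Bool,
            (mu p q c * Pe M c e - (if c e = true then mu p q c * Pe M c e else 0)) := by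
      intro e
      rw [Finset.sum_filter]
      refine Finset.sum_congr rfl fun c _ => ?_
      cases hce : c e
      · rw [if_pos rfl, if_neg (by simp [hce]), sub_zero]
      · rw [if_neg (by simp [hce]), if_pos rfl, sub_self]
    rw [Finset.sum_congr rfl fun e _ => h1 e, Finset.sum_comm]
    have h2 : ∀ c : Sym2 (Fin k) → Bool,
        ∑ e : Sym2 (Fin k),
          (mu p q c * Pe M c e - (if c e = true then mu p q c * Pe M c e else 0))
        = mu p q c * ((k : ℝ) - 1) - mu p q c * Ac M c := by
      intro c
      rw [Finset.sum_sub_distrib, ← Finset.mul_sum, sum_Pe M hk (hs c) (ht c)]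
      congr 1
      rw [← sum_Pe_true M c, Finset.mul_sum]
      refine Finset.sum_congr rfl fun e _ => ?_
      by_cases hce : c e = true
      · rw [if_pos hce, if_pos hce]
      · rw [if_neg hce, if_neg hce, mul_zero]
    rw [Finset.sum_congr rfl fun c _ => h2 c, Finset.sum_sub_distrib, ← Finset.sum_mul,
      sum_mu hpq, one_mul]
  calc q * (((k : ℝ) - 1) - ∑ c : Sym2 (Fin k) → Bool, mu p q c * Ac M c)
      = ∑ e : Sym2 (Fin k), q * ∑ c ∈ univ.filter
          (fun c : Sym2 (Fin k) → Bool => c e = false), mu p q c * Pe M c e := by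
        rw [← Finset.mul_sum, T0]
    _ ≤ ∑ e : Sym2 (Fin k), Real.exp ε * (p * ∑ c ∈ univ.filter
          (fun c : Sym2 (Fin k) → Bool => c e = true), mu p q c * Pe M c e) :=
        Finset.sum_le_sum fun e _ => pairing M hp hq h0 hDP e
    _ = Real.exp ε * (p * ∑ c : Sym2 (Fin k) → Bool, mu p q c * Ac M c) := by
        rw [← Finset.mul_sum, ← Finset.mul_sum, T1]

end Global

section ExpOpt

lemma sum_mu_Dv [NeZero k] {p q : ℝ} (hpq : p + q = 1) :
    ∑ c : Sym2 (Fin k) → Bool, mu p q c * ((Dv c).card : ℝ)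
      = ∑ v ∈ univ.filter (fun v : Fin k => v ≠ 0), q ^ (v : ℕ) := by
  have hD : ∀ c : Sym2 (Fin k) → Bool, ((Dv c).card : ℝ)
      = ∑ v ∈ univ.filter (fun v : Fin k => v ≠ 0),
          (if (∀ u, u < v → c s(u, v) = true) then (1 : ℝ) else 0) := by
    intro c
    rw [Finset.sum_boole, Finset.filter_filter]
    unfold Dv
    norm_num
  rw [Finset.sum_congr rfl fun c _ => by rw [hD c]]
  have swap : ∑ c : Sym2 (Fin k) → Bool,
      mu p q c * ∑ v ∈ univ.filter (fun v : Fin k => v ≠ 0),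
        (if (∀ u, u < v → c s(u, v) = true) then (1 : ℝ) else 0)
      = ∑ v ∈ univ.filter (fun v : Fin k => v ≠ 0),
          ∑ c : Sym2 (Fin k) → Bool,
            mu p q c * (if (∀ u, u < v → c s(u, v) = true) then (1 : ℝ) else 0) := by
    rw [Finset.sum_congr rfl fun (c : Sym2 (Fin k) → Bool) _ => Finset.mul_sum
      (univ.filter (fun v : Fin k => v ≠ 0)) _ (mu p q c)]
    exact Finset.sum_comm
  rw [swap]
  refine Finset.sum_congr rfl fun v hv => ?_
  -- rewrite the indicator via the edge set below v
  set B : Finset (Sym2 (Fin k)) := (Finset.Iio v).image (fun u => s(u, v)) with hB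
  have hiff : ∀ c : Sym2 (Fin k) → Bool,
      (∀ u, u < v → c s(u, v) = true) ↔ (∀ e ∈ B, c e = true) := by
    intro c
    constructor
    · intro h e he
      rw [hB] at he
      simp only [Finset.mem_image, Finset.mem_Iio] at he
      obtain ⟨u, hu, rfl⟩ := he
      exact h u hu
    · intro h u hu
      refine h s(u, v) ?_
      rw [hB]
      simp only [Finset.mem_image, Finset.mem_Iio]
      exact ⟨u, hu, rfl⟩
  have hrw : ∀ c : Sym2 (Fin k) → Bool,
      (if (∀ u, u < v → c s(u, v) = true) then (1 : ℝ) else 0)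
        = (if (∀ e ∈ B, c e = true) then (1 : ℝ) else 0) := by
    intro c
    exact if_congr (hiff c) rfl rfl
  rw [Finset.sum_congr rfl fun c _ => by rw [hrw c], mu_indicator hpq B]
  congr 1
  rw [hB, Finset.card_image_of_injOn, Fin.card_Iio]
  intro u hu u' hu' huv
  simp only [Finset.mem_coe, Finset.mem_Iio] at hu hu'
  rw [Sym2.eq_iff] at huv
  rcases huv with ⟨h1, -⟩ | ⟨h1, h2⟩
  · exact h1
  · exact absurd (h1 ▸ hu) (lt_irrefl v)

lemma sum_geom_filter_le [NeZero k] {p q : ℝ} (hq0 : 0 ≤ q) (hp0 : 0 < p)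
    (hpq : p + q = 1) :
    ∑ v ∈ univ.filter (fun v : Fin k => v ≠ 0), q ^ (v : ℕ) ≤ q / p := by
  rw [Finset.filter_ne', Finset.sum_erase_eq_sub (mem_univ (0 : Fin k))]
  have h0 : q ^ ((0 : Fin k) : ℕ) = 1 := by
    rw [Fin.val_zero, pow_zero]
  rw [h0]
  have hsum : ∑ v : Fin k, q ^ (v : ℕ) = ∑ i ∈ Finset.range k, q ^ i :=
    Fin.sum_univ_eq_sum_range (fun i => q ^ i) k
  rw [hsum]
  have hgeom := geom_sum_mul q k
  have hqk : 0 ≤ q ^ k := pow_nonneg hq0 k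
  have hqp : q - 1 = -p := by linarith
  have hSp : (∑ i ∈ Finset.range k, q ^ i) * p = 1 - q ^ k := by
    linear_combination (-1 : ℝ) * hgeom + (∑ i ∈ Finset.range k, q ^ i) * hqp
  rw [le_div_iff₀ hp0]
  nlinarith [hSp, hqk]
end ExpOpt

end STLB

open STLB

/-- Lower bound for differentially private spanning-tree procurement: there exists `k₀`
such that for all `k ≥ k₀`, any (not necessarily truthful) randomized mechanism `M`
choosing a spanning tree of the complete graph on `k` vertices that is
`ε`-differentially private and has expected total cost at most `opt(c) + k/24` on every
cost vector `c` with entries in `[0,1]` must satisfy `exp(ε) ≥ (2k − 1)/48`. -/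
theorem spanningTree_procurement_lower_bound :
    ∃ k₀ : ℕ, ∀ k : ℕ, k₀ ≤ k → ∀ ε : ℝ,
      ∀ M : (Sym2 (Fin k) → ℝ) → Finset (Sym2 (Fin k)) → ℝ,
      (∀ c : Sym2 (Fin k) → ℝ, (∀ e : Sym2 (Fin k), ¬ e.IsDiag → c e ∈ Set.Icc (0 : ℝ) 1) →
        (∀ T, 0 ≤ M c T) ∧ (∀ T, ¬ IsSpanningTree k T → M c T = 0) ∧
          (∑ T : Finset (Sym2 (Fin k)), M c T = 1)) →
      (∀ c c' : Sym2 (Fin k) → ℝ,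
        (∀ e : Sym2 (Fin k), ¬ e.IsDiag → c e ∈ Set.Icc (0 : ℝ) 1) →
        (∀ e : Sym2 (Fin k), ¬ e.IsDiag → c' e ∈ Set.Icc (0 : ℝ) 1) →
        (∃ e₀ : Sym2 (Fin k), ∀ e : Sym2 (Fin k), e ≠ e₀ → c e = c' e) →
        ∀ T : Finset (Sym2 (Fin k)), M c T ≤ Real.exp ε * M c' T) →
      (∀ c : Sym2 (Fin k) → ℝ, (∀ e : Sym2 (Fin k), ¬ e.IsDiag → c e ∈ Set.Icc (0 : ℝ) 1) →
        (∑ T : Finset (Sym2 (Fin k)), M c T * ∑ e ∈ T, c e)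
          ≤ sInf {x : ℝ | ∃ T : Finset (Sym2 (Fin k)), IsSpanningTree k T ∧ x = ∑ e ∈ T, c e}
            + k / 24) →
      Real.exp ε ≥ (2 * k - 1) / 48 := by
  refine ⟨2, ?_⟩
  intro k hk ε M hGood hDP hAcc
  haveI : NeZero k := ⟨by omega⟩
  have hk1 : 1 ≤ k := by omega
  have hkR : (2 : ℝ) ≤ (k : ℝ) := by exact_mod_cast hk
  have hkpos : (0 : ℝ) < (k : ℝ) := by linarith
  have hden : (0 : ℝ) < (k : ℝ) + 24 := by linarith
  set p : ℝ := 24 / ((k : ℝ) + 24) with hpdef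
  set q : ℝ := (k : ℝ) / ((k : ℝ) + 24) with hqdef
  have hp0 : 0 < p := div_pos (by norm_num) hden
  have hq0 : 0 ≤ q := le_of_lt (div_pos hkpos hden)
  have hpq : p + q = 1 := by
    rw [hpdef, hqdef]
    field_simp
    ring
  have h0 : ∀ c : Sym2 (Fin k) → Bool, ∀ T, 0 ≤ M (bc c) T :=
    fun c => (hGood _ (bc_mem c)).1
  have hsup : ∀ c : Sym2 (Fin k) → Bool, ∀ T, ¬ IsSpanningTree k T → M (bc c) T = 0 :=
    fun c => (hGood _ (bc_mem c)).2.1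
  have htot : ∀ c : Sym2 (Fin k) → Bool, ∑ T : Finset (Sym2 (Fin k)), M (bc c) T = 1 :=
    fun c => (hGood _ (bc_mem c)).2.2
  have hDP' : ∀ (c c' : Sym2 (Fin k) → Bool) (e₀ : Sym2 (Fin k)),
      (∀ f ≠ e₀, c f = c' f) →
      ∀ T, M (bc c) T ≤ Real.exp ε * M (bc c') T := by
    intro c c' e₀ h T
    refine hDP _ _ (bc_mem c) (bc_mem c') ⟨e₀, fun f hf => ?_⟩ T
    unfold STLB.bc
    rw [h f hf]
  have hAcc' : ∀ c : Sym2 (Fin k) → Bool,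
      Ac M c ≤ Opt k (bc c) + (k : ℝ) / 24 := by
    intro c
    have := hAcc (bc c) (bc_mem c)
    unfold STLB.Ac STLB.Opt
    exact this
  set S1 := ∑ c : Sym2 (Fin k) → Bool, mu p q c * Ac M c with hS1def
  have hglob : q * (((k : ℝ) - 1) - S1) ≤ Real.exp ε * (p * S1) :=
    global_dp M hk1 hp0.le hq0 hpq h0 hsup htot hDP'
  -- accuracy: S1 ≤ k / 12
  have hS1le : S1 ≤ (k : ℝ) / 12 := by
    have step1 : S1 ≤ ∑ c : Sym2 (Fin k) → Bool,
        mu p q c * (Opt k (bc c) + (k : ℝ) / 24) :=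
      Finset.sum_le_sum fun c _ =>
        mul_le_mul_of_nonneg_left (hAcc' c) (mu_nonneg hp0.le hq0 c)
    have step2 : ∑ c : Sym2 (Fin k) → Bool,
        mu p q c * (Opt k (bc c) + (k : ℝ) / 24)
        = (∑ c : Sym2 (Fin k) → Bool, mu p q c * Opt k (bc c)) + (k : ℝ) / 24 := by
      rw [Finset.sum_congr rfl fun (c : Sym2 (Fin k) → Bool) _ =>
        mul_add (mu p q c) (Opt k (bc c)) ((k : ℝ) / 24), Finset.sum_add_distrib,
        ← Finset.sum_mul, sum_mu hpq, one_mul]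
    have step3 : ∑ c : Sym2 (Fin k) → Bool, mu p q c * Opt k (bc c)
        ≤ ∑ c : Sym2 (Fin k) → Bool, mu p q c * ((Dv c).card : ℝ) :=
      Finset.sum_le_sum fun c _ =>
        mul_le_mul_of_nonneg_left (opt_le c) (mu_nonneg hp0.le hq0 c)
    have step4 : ∑ c : Sym2 (Fin k) → Bool, mu p q c * ((Dv c).card : ℝ) ≤ q / p := by
      rw [sum_mu_Dv hpq]
      exact sum_geom_filter_le hq0 hp0 hpq
    have hqp : q / p = (k : ℝ) / 24 := by
      rw [hqdef, hpdef, div_div_div_eq]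
      rw [div_eq_div_iff (by positivity) (by positivity)]
      ring
    linarith
  -- combine
  have hmono1 : q * (((k : ℝ) - 1) - (k : ℝ) / 12) ≤ q * (((k : ℝ) - 1) - S1) :=
    mul_le_mul_of_nonneg_left (by linarith) hq0
  have hmono2 : Real.exp ε * (p * S1) ≤ Real.exp ε * (p * ((k : ℝ) / 12)) :=
    mul_le_mul_of_nonneg_left (mul_le_mul_of_nonneg_left hS1le hp0.le)
      (Real.exp_pos ε).le
  have final : q * (((k : ℝ) - 1) - (k : ℝ) / 12)
      ≤ Real.exp ε * (p * ((k : ℝ) / 12)) := le_trans hmono1 (le_trans hglob hmono2)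
  have h2 : (q * (((k : ℝ) - 1) - (k : ℝ) / 12)) * ((k : ℝ) + 24)
      ≤ (Real.exp ε * (p * ((k : ℝ) / 12))) * ((k : ℝ) + 24) :=
    mul_le_mul_of_nonneg_right final hden.le
  have h3 : (q * (((k : ℝ) - 1) - (k : ℝ) / 12)) * ((k : ℝ) + 24)
      = (k : ℝ) * (((k : ℝ) - 1) - (k : ℝ) / 12) := by
    rw [hqdef]
    field_simp
  have h4 : (Real.exp ε * (p * ((k : ℝ) / 12))) * ((k : ℝ) + 24)
      = Real.exp ε * (2 * (k : ℝ)) := by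
    rw [hpdef]
    field_simp
    ring
  rw [h3, h4] at h2
  rw [ge_iff_le]
  nlinarith [h2, hkpos, hkR, Real.exp_pos ε]
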